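/- The chord-based verification is sound: fix \alpha \in (0,1/2). Suppose there exists a finite partition 1/2 = q_0 < q_1 < \dots < q_m = 1 where each [q_{j-1}, q_j] = [k_j/2^{n_j}, (k_j+1)/2^{n_j}] for integers k_j, n_j, and suppose the chord C_j(x) joining (q_{j-1}, T_\alpha(q_{j-1})) and (q_j, T_\alpha(q_j)) satisfies C_j(x) \ge f(x) H(\alpha) for all x \in [q_{j-1}, q_j]. Then T_\alpha(p) \ge f(p) H(\alpha) for all p \in [0,1]. -/

import Mathlib

open Finset

/-- `f2 x = -x log₂ x`, the summand of base-2 Shannon entropy. -/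
noncomputable def f2 (x : ℝ) : ℝ := -x * Real.logb 2 x

/-- Binary entropy function `H(α)` (base 2). -/
noncomputable def binEnt (α : ℝ) : ℝ := f2 α + f2 (1 - α)

/-- Joint pmf of `(Xⁿ, Yⁿ)` where `Xⁿ` is i.i.d. Bernoulli(1/2) and
`Yⁿ = Xⁿ ⊕ Zⁿ` with `Zⁿ` i.i.d. Bernoulli(α) (a memoryless BSC(α)). -/
noncomputable def jointP (n : ℕ) (α : ℝ) (x y : Fin n → Bool) : ℝ :=
  (1/2)^n * ∏ i, (if x i = y i then 1 - α else α)

/-- `Pr{b(Xⁿ) = u, Yⁿ = y}`. -/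
noncomputable def pBY (n : ℕ) (α : ℝ) (b : (Fin n → Bool) → Bool) (u : Bool)
    (y : Fin n → Bool) : ℝ :=
  ∑ x : Fin n → Bool, if b x = u then jointP n α x y else 0

/-- `Pr{b(Xⁿ) = u}` for `Xⁿ` uniform on `{0,1}ⁿ`. -/
noncomputable def pB (n : ℕ) (b : (Fin n → Bool) → Bool) (u : Bool) : ℝ :=
  ∑ x : Fin n → Bool, if b x = u then (1/2)^n else 0

/-- `H(b(Xⁿ))`, the entropy of the Boolean function's output. -/
noncomputable def HB (n : ℕ) (b : (Fin n → Bool) → Bool) : ℝ :=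
  ∑ u : Bool, f2 (pB n b u)

/-- `Pr{b(Xⁿ) = 0 ∣ Yⁿ = y}` (note `Pr{Yⁿ = y} = 2⁻ⁿ` since `Yⁿ` is uniform;
`0` is encoded as `false`). -/
noncomputable def condP (n : ℕ) (α : ℝ) (b : (Fin n → Bool) → Bool)
    (y : Fin n → Bool) : ℝ :=
  (2:ℝ)^n * pBY n α b false y

/-- The conditional entropy `H(b(Xⁿ) ∣ Yⁿ)`. -/
noncomputable def condHB (n : ℕ) (α : ℝ) (b : (Fin n → Bool) → Bool) : ℝ :=
  ∑ y : Fin n → Bool, (1/2)^n * ∑ u : Bool, f2 ((2:ℝ)^n * pBY n α b u y)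

/-- The mutual information `I(b(Xⁿ); Yⁿ) = H(b(Xⁿ)) - H(b(Xⁿ) ∣ Yⁿ)`. -/
noncomputable def MI (n : ℕ) (α : ℝ) (b : (Fin n → Bool) → Bool) : ℝ :=
  HB n b - condHB n α b

/-- The numeric value of `x ∈ {0,1}ⁿ` with the first coordinate most significant;
`x ≺_L x'` in the lexicographic order iff `vecVal x < vecVal x'`. -/
def vecVal {n : ℕ} (x : Fin n → Bool) : ℕ :=
  ∑ i : Fin n, if x i then 2 ^ (n - 1 - i.val) else 0

/-- The unique lex Boolean function on `n` inputs whose preimage of `0` (= `false`)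
is the initial segment of size `k` of the lexicographic order on `{0,1}ⁿ`. -/
def lexFun (n k : ℕ) : (Fin n → Bool) → Bool := fun x => decide (k ≤ vecVal x)

/-- `T_α` at the dyadic rational `k/2ⁿ`:
`T_α(k/2ⁿ) = E_{Yⁿ} f(Pr{b(Xⁿ)=0 ∣ Yⁿ})` where `b` is the lex function on `n`
inputs with `Pr{b(Xⁿ)=0} = k/2ⁿ`. -/
noncomputable def Tdy (α : ℝ) (n k : ℕ) : ℝ :=
  ∑ y : Fin n → Bool, (1/2)^n * f2 (condP n α (lexFun n k) y)


lemma f2_eq (x : ℝ) : f2 x = (Real.log 2)⁻¹ • Real.negMulLog x := by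
  simp [f2, Real.negMulLog, Real.logb, div_eq_inv_mul]; ring

lemma concave_f2 : ConcaveOn ℝ (Set.Ici 0) f2 := by
  have h := Real.concaveOn_negMulLog.smul (c := (Real.log 2)⁻¹)
    (by positivity)
  rw [show f2 = (Real.log 2)⁻¹ • Real.negMulLog from funext f2_eq]; exact h

lemma f2_nonneg {x : ℝ} (h0 : 0 ≤ x) (h1 : x ≤ 1) : 0 ≤ f2 x := by
  rcases eq_or_lt_of_le h0 with h|h
  · simp [f2, ← h]
  · have : Real.logb 2 x ≤ 0 := Real.logb_nonpos (by norm_num) h0 h1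
    simp only [f2, neg_mul]
    nlinarith

lemma f2_mul {x y : ℝ} (hx : 0 ≤ x) (hy : 0 ≤ y) :
    f2 (x * y) = x * f2 y + y * f2 x := by
  rcases eq_or_lt_of_le hx with h|h
  · simp [f2, ← h]
  rcases eq_or_lt_of_le hy with h'|h'
  · simp [f2, ← h']
  simp only [f2]
  rw [Real.logb, Real.logb, Real.logb, Real.log_mul (ne_of_gt h) (ne_of_gt h')]
  field_simp
  ring

lemma chord_ineq {a A α : ℝ} (ha : 0 ≤ a) (hA : a ≤ A) (h0 : 0 ≤ α) (h1 : α ≤ 1) :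
    f2 a + f2 A ≤ f2 (α * A + (1 - α) * a) + f2 ((1 - α) * A + α * a) := by
  have hA0 : (0:ℝ) ≤ A := le_trans ha hA
  have h1' : (0:ℝ) ≤ 1 - α := by linarith
  have c1 := concave_f2.2 (Set.mem_Ici.mpr hA0) (Set.mem_Ici.mpr ha) h0 h1' (by ring)
  have c2 := concave_f2.2 (Set.mem_Ici.mpr hA0) (Set.mem_Ici.mpr ha) h1' h0 (by ring)
  simp only [smul_eq_mul] at c1 c2
  have e1 : α • A + (1 - α) • a = α * A + (1 - α) * a := by simp [smul_eq_mul]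
  linarith [c1, c2]

lemma f2_two_mul (p : ℝ) (hp : 0 ≤ p) : f2 (2 * p) = 2 * f2 p - 2 * p := by
  rcases eq_or_lt_of_le hp with h|h
  · simp [f2, ← h]
  simp only [f2]
  rw [Real.logb, Real.logb, Real.log_mul (by norm_num) (ne_of_gt h)]
  have : Real.log 2 ≠ 0 := by positivity
  field_simp
  ring

noncomputable def vvEquiv (n : ℕ) : (Fin n → Bool) ≃ Fin (2^n) :=
  (Equiv.arrowCongr Fin.revPerm finTwoEquiv.symm).trans finFunctionFinEquiv

lemma vvEquiv_val {n : ℕ} (x : Fin n → Bool) : (vvEquiv n x : ℕ) = vecVal x := by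
  simp only [vvEquiv, Equiv.trans_apply, finFunctionFinEquiv_apply]
  refine (Fintype.sum_equiv Fin.revPerm _ _ ?_).symm
  intro i
  simp only [vecVal, Equiv.arrowCongr_apply, Function.comp_apply, Fin.revPerm_apply,
    Equiv.symm_symm, Fin.rev_rev]
  have hrev : ((Fin.rev i).val) = n - 1 - i.val := by rw [Fin.val_rev]; omega
  rcases hxi : x i with _|_ <;>
    simp [finTwoEquiv, hxi, Fin.revPerm, hrev] <;> omega

lemma vecVal_lt {n : ℕ} (x : Fin n → Bool) : vecVal x < 2^n := by
  rw [← vvEquiv_val]; exact (vvEquiv n x).isLt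

lemma card_vecVal_lt {n k : ℕ} (hk : k ≤ 2^n) :
    (univ.filter fun x : Fin n → Bool => vecVal x < k).card = k := by
  have h1 : (univ.filter fun x : Fin n → Bool => vecVal x < k).card
      = (univ.filter fun j : Fin (2^n) => (j : ℕ) < k).card := by
    apply Finset.card_nbij (vvEquiv n)
    · intro x hx; simp only [mem_coe, mem_filter, mem_univ, true_and] at *
      rw [vvEquiv_val]; exact hx
    · intro a _ b _ hab; exact (vvEquiv n).injective hab
    · intro j hj; refine ⟨(vvEquiv n).symm j, ?_, by simp⟩
      simp only [mem_coe, mem_filter, mem_univ, true_and, Set.mem_image] at *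
      rw [← vvEquiv_val, Equiv.apply_symm_apply]; exact hj
  rw [h1, ← Finset.card_range k]
  apply Finset.card_nbij (α := Fin (2^n)) (fun j => (j : ℕ)) (t := Finset.range k)
  · intro j hj; simp only [mem_coe, mem_filter, mem_univ, true_and, mem_range, card_range] at *; exact hj
  · intro a _ b _ hab; exact Fin.val_injective hab
  · intro a ha
    simp only [mem_coe, mem_range, Set.mem_image] at *
    exact ⟨⟨a, lt_of_lt_of_le ha hk⟩, by simp [ha], rfl⟩


lemma vecVal_snoc {n : ℕ} (x : Fin n → Bool) (b : Bool) :
    vecVal (Fin.snoc x b : Fin (n+1) → Bool) = 2 * vecVal x + (if b then 1 else 0) := by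
  simp only [vecVal, Fin.sum_univ_castSucc, Fin.snoc_castSucc, Fin.snoc_last]
  rw [Finset.mul_sum]
  congr 1
  · apply Finset.sum_congr rfl
    intro i _
    have h : n + 1 - 1 - (i.castSucc : ℕ) = (n - 1 - i.val) + 1 := by
      have := i.isLt; simp [Fin.coe_castSucc]; omega
    rw [h]
    rcases x i <;> simp [pow_succ]; ring
  · simp [Fin.val_last]

lemma vecVal_cons {n : ℕ} (x : Fin n → Bool) (b : Bool) :
    vecVal (Fin.cons b x : Fin (n+1) → Bool) = (if b then 2^n else 0) + vecVal x := by
  simp only [vecVal, Fin.sum_univ_succ, Fin.cons_zero, Fin.cons_succ]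
  congr 1
  apply Finset.sum_congr rfl
  intro i _
  have h : n + 1 - 1 - ((i.succ : Fin (n+1)) : ℕ) = n - 1 - i.val := by
    simp [Fin.val_succ]; omega
  rw [h]

lemma jointP_snoc {n : ℕ} (α : ℝ) (x y : Fin n → Bool) (b c : Bool) :
    jointP (n+1) α (Fin.snoc x b) (Fin.snoc y c)
      = (1/2) * (if b = c then 1 - α else α) * jointP n α x y := by
  simp only [jointP, Fin.prod_univ_castSucc, Fin.snoc_castSucc, Fin.snoc_last, pow_succ]
  ring

lemma jointP_cons {n : ℕ} (α : ℝ) (x y : Fin n → Bool) (b c : Bool) :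
    jointP (n+1) α (Fin.cons b x) (Fin.cons c y)
      = (1/2) * (if b = c then 1 - α else α) * jointP n α x y := by
  simp only [jointP, Fin.prod_univ_succ, Fin.cons_zero, Fin.cons_succ, pow_succ]
  ring

lemma sumSnoc {n : ℕ} (F : (Fin (n+1) → Bool) → ℝ) :
    (∑ z : Fin (n+1) → Bool, F z) = ∑ b : Bool, ∑ x : Fin n → Bool, F (Fin.snoc x b) := by
  rw [← Equiv.sum_comp (Fin.snocEquiv (fun _ => Bool)) F, Fintype.sum_prod_type]
  rfl

lemma sumCons {n : ℕ} (F : (Fin (n+1) → Bool) → ℝ) :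
    (∑ z : Fin (n+1) → Bool, F z) = ∑ b : Bool, ∑ x : Fin n → Bool, F (Fin.cons b x) := by
  rw [← Equiv.sum_comp (Fin.consEquiv (fun _ => Bool)) F, Fintype.sum_prod_type]
  rfl

lemma lexFun_eq_false {n k : ℕ} (x : Fin n → Bool) :
    lexFun n k x = false ↔ vecVal x < k := by
  simp [lexFun]

lemma jointP_nonneg {n : ℕ} {α : ℝ} (h0 : 0 ≤ α) (h1 : α ≤ 1) (x y : Fin n → Bool) :
    0 ≤ jointP n α x y := by
  apply mul_nonneg (by positivity)
  apply Finset.prod_nonneg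
  intro i _
  split <;> linarith

lemma sum_jointP {n : ℕ} {α : ℝ} (x : Fin n → Bool) :
    ∑ y : Fin n → Bool, jointP n α x y = (1/2)^n := by
  induction n with
  | zero => simp [jointP]
  | succ n ih =>
    rw [sumCons]
    have hx : x = Fin.cons (x 0) (Fin.tail x) := (Fin.cons_self_tail x).symm
    have : ∀ c y', jointP (n+1) α x (Fin.cons c y')
        = (1/2) * (if x 0 = c then 1 - α else α) * jointP n α (Fin.tail x) y' := by
      intro c y'
      conv_lhs => rw [hx]
      rw [jointP_cons]
    simp only [this]
    rw [Fintype.sum_bool]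
    simp only [← Finset.mul_sum, ih (Fin.tail x)]
    rcases hx0 : x 0 <;> simp [hx0, pow_succ] <;> ring

lemma pBY_nonneg {n : ℕ} {α : ℝ} (h0 : 0 ≤ α) (h1 : α ≤ 1) (b : (Fin n → Bool) → Bool)
    (u : Bool) (y : Fin n → Bool) : 0 ≤ pBY n α b u y := by
  apply Finset.sum_nonneg
  intro x _
  split
  · exact jointP_nonneg h0 h1 x y
  · exact le_refl _

lemma pBY_mono {n : ℕ} {α : ℝ} (h0 : 0 ≤ α) (h1 : α ≤ 1) {k l : ℕ} (hkl : k ≤ l)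
    (y : Fin n → Bool) :
    pBY n α (lexFun n k) false y ≤ pBY n α (lexFun n l) false y := by
  apply Finset.sum_le_sum
  intro x _
  by_cases h : lexFun n k x = false
  · rw [if_pos h, if_pos]
    rw [lexFun_eq_false] at *
    omega
  · rw [if_neg h]
    split
    · exact jointP_nonneg h0 h1 x y
    · exact le_refl _

lemma pBY_lex_snoc {n k : ℕ} {α : ℝ} (y : Fin n → Bool) (c : Bool) :
    pBY (n+1) α (lexFun (n+1) (2*k+1)) false (Fin.snoc y c)
      = (1/2) * ((if false = c then 1-α else α) * pBY n α (lexFun n (k+1)) false y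
           + (if true = c then 1-α else α) * pBY n α (lexFun n k) false y) := by
  rw [pBY, sumSnoc, Fintype.sum_bool]
  have e1 : ∀ x : Fin n → Bool,
      (if lexFun (n+1) (2*k+1) (Fin.snoc x true) = false
        then jointP (n+1) α (Fin.snoc x true) (Fin.snoc y c) else 0)
      = (1/2) * (if true = c then 1-α else α) *
          (if lexFun n k x = false then jointP n α x y else 0) := by
    intro x
    rw [jointP_snoc]
    by_cases h : lexFun n k x = false
    · rw [if_pos h, if_pos]
      rw [lexFun_eq_false] at *
      rw [vecVal_snoc]
      simp; omega
    · rw [if_neg h, if_neg, mul_zero]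
      rw [lexFun_eq_false] at *
      rw [vecVal_snoc]
      simp at *; omega
  have e2 : ∀ x : Fin n → Bool,
      (if lexFun (n+1) (2*k+1) (Fin.snoc x false) = false
        then jointP (n+1) α (Fin.snoc x false) (Fin.snoc y c) else 0)
      = (1/2) * (if false = c then 1-α else α) *
          (if lexFun n (k+1) x = false then jointP n α x y else 0) := by
    intro x
    rw [jointP_snoc]
    by_cases h : lexFun n (k+1) x = false
    · rw [if_pos h, if_pos]
      rw [lexFun_eq_false] at *
      rw [vecVal_snoc]
      simp; omega
    · rw [if_neg h, if_neg, mul_zero]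
      rw [lexFun_eq_false] at *
      rw [vecVal_snoc]
      simp at *; omega
  simp only [e1, e2]
  rw [← Finset.mul_sum, ← Finset.mul_sum]
  rw [pBY, pBY]
  ring

lemma pBY_lex_cons {n k : ℕ} {α : ℝ} (hk : k ≤ 2^n) (y : Fin n → Bool) (c : Bool) :
    pBY (n+1) α (lexFun (n+1) k) false (Fin.cons c y)
      = (1/2) * (if false = c then 1-α else α) * pBY n α (lexFun n k) false y := by
  rw [pBY, sumCons, Fintype.sum_bool]
  have e1 : ∀ x : Fin n → Bool,
      (if lexFun (n+1) k (Fin.cons true x) = false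
        then jointP (n+1) α (Fin.cons true x) (Fin.cons c y) else 0) = 0 := by
    intro x
    rw [if_neg]
    rw [lexFun_eq_false, vecVal_cons]
    simp; omega
  have e2 : ∀ x : Fin n → Bool,
      (if lexFun (n+1) k (Fin.cons false x) = false
        then jointP (n+1) α (Fin.cons false x) (Fin.cons c y) else 0)
      = (1/2) * (if false = c then 1-α else α) *
          (if lexFun n k x = false then jointP n α x y else 0) := by
    intro x
    rw [jointP_cons]
    by_cases h : lexFun n k x = false
    · rw [if_pos h, if_pos]
      rw [lexFun_eq_false] at *
      rw [vecVal_cons]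
      simpa using h
    · rw [if_neg h, if_neg, mul_zero]
      rw [lexFun_eq_false] at *
      rw [vecVal_cons]
      simpa using h
  simp only [e1, e2]
  rw [← Finset.mul_sum, pBY]
  simp


lemma sum_pBY_lex {n k : ℕ} {α : ℝ} (hk : k ≤ 2^n) :
    ∑ y : Fin n → Bool, pBY n α (lexFun n k) false y = k * (1/2)^n := by
  unfold pBY
  rw [Finset.sum_comm]
  have e : ∀ x : Fin n → Bool,
      (∑ y : Fin n → Bool, if lexFun n k x = false then jointP n α x y else 0)
        = if lexFun n k x = false then (1/2:ℝ)^n else 0 := by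
    intro x
    by_cases h : lexFun n k x = false
    · simp only [h, if_true]; exact sum_jointP x
    · simp [h]
  simp only [e]
  rw [Finset.sum_ite, Finset.sum_const, Finset.sum_const_zero, add_zero, nsmul_eq_mul]
  have hfc : (univ.filter fun x : Fin n → Bool => lexFun n k x = false)
      = (univ.filter fun x : Fin n → Bool => vecVal x < k) := by
    apply Finset.filter_congr
    intro x _
    simp [lexFun_eq_false]
  rw [hfc, card_vecVal_lt hk]

lemma condP_nonneg {n k : ℕ} {α : ℝ} (h0 : 0 ≤ α) (h1 : α ≤ 1) (y : Fin n → Bool) :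
    0 ≤ condP n α (lexFun n k) y :=
  mul_nonneg (by positivity) (pBY_nonneg h0 h1 _ _ _)

lemma condP_mono {n k : ℕ} {α : ℝ} (h0 : 0 ≤ α) (h1 : α ≤ 1) (y : Fin n → Bool) :
    condP n α (lexFun n k) y ≤ condP n α (lexFun n (k+1)) y :=
  mul_le_mul_of_nonneg_left (pBY_mono h0 h1 (Nat.le_succ k) y) (by positivity)

lemma Tdy_midpoint {α : ℝ} (h0 : 0 ≤ α) (h1 : α ≤ 1) (n k : ℕ) :
    (Tdy α n k + Tdy α n (k+1))/2 ≤ Tdy α (n+1) (2*k+1) := by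
  have keyT : ∀ (y : Fin n → Bool),
      condP (n+1) α (lexFun (n+1) (2*k+1)) (Fin.snoc y true)
      = α * condP n α (lexFun n (k+1)) y + (1-α) * condP n α (lexFun n k) y := by
    intro y
    rw [condP, pBY_lex_snoc, condP, condP, pow_succ]
    norm_num
    ring
  have keyF : ∀ (y : Fin n → Bool),
      condP (n+1) α (lexFun (n+1) (2*k+1)) (Fin.snoc y false)
      = (1-α) * condP n α (lexFun n (k+1)) y + α * condP n α (lexFun n k) y := by
    intro y
    rw [condP, pBY_lex_snoc, condP, condP, pow_succ]
    norm_num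
    ring
  have hrw : Tdy α (n+1) (2*k+1) = ∑ y : Fin n → Bool, (1/2)^(n+1) *
      (f2 (α * condP n α (lexFun n (k+1)) y + (1-α) * condP n α (lexFun n k) y)
       + f2 ((1-α) * condP n α (lexFun n (k+1)) y + α * condP n α (lexFun n k) y)) := by
    rw [Tdy, sumSnoc (F := fun y => (1/2:ℝ)^(n+1) *
      f2 (condP (n+1) α (lexFun (n+1) (2*k+1)) y)), Fintype.sum_bool,
      ← Finset.sum_add_distrib]
    apply Finset.sum_congr rfl
    intro y _
    rw [keyT y, keyF y]
    ring
  rw [hrw]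
  have lhs : (Tdy α n k + Tdy α n (k+1))/2 = ∑ y : Fin n → Bool, (1/2)^(n+1) *
      (f2 (condP n α (lexFun n k) y) + f2 (condP n α (lexFun n (k+1)) y)) := by
    rw [Tdy, Tdy, ← Finset.sum_add_distrib, Finset.sum_div]
    apply Finset.sum_congr rfl
    intro y _
    rw [pow_succ]
    ring
  rw [lhs]
  apply Finset.sum_le_sum
  intro y _
  have h := chord_ineq (condP_nonneg (k := k) h0 h1 y) (condP_mono (k := k) h0 h1 y) h0 h1
  have hp : (0:ℝ) < (1/2)^(n+1) := by positivity
  nlinarith [h, hp]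

lemma Tdy_half {α : ℝ} (h0 : 0 ≤ α) (h1 : α ≤ 1) {n k : ℕ} (hk : k ≤ 2^n) :
    Tdy α (n+1) k = Tdy α n k / 2 + ((k:ℝ)/2^n) * binEnt α / 2 := by
  have keyT : ∀ (y : Fin n → Bool),
      condP (n+1) α (lexFun (n+1) k) (Fin.cons true y)
      = α * condP n α (lexFun n k) y := by
    intro y
    rw [condP, pBY_lex_cons hk, condP, pow_succ]
    norm_num
    ring
  have keyF : ∀ (y : Fin n → Bool),
      condP (n+1) α (lexFun (n+1) k) (Fin.cons false y)
      = (1-α) * condP n α (lexFun n k) y := by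
    intro y
    rw [condP, pBY_lex_cons hk, condP, pow_succ]
    norm_num
    ring
  rw [Tdy, sumCons (F := fun y => (1/2:ℝ)^(n+1) *
      f2 (condP (n+1) α (lexFun (n+1) k) y)), Fintype.sum_bool]
  simp only [keyT, keyF]
  have h1' : (0:ℝ) ≤ 1 - α := by linarith
  have e1 : ∀ y : Fin n → Bool, (1/2:ℝ)^(n+1) * f2 (α * condP n α (lexFun n k) y)
      = (α/2) * ((1/2)^n * f2 (condP n α (lexFun n k) y))
        + (f2 α/2) * ((1/2)^n * condP n α (lexFun n k) y) := by
    intro y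
    rw [f2_mul h0 (condP_nonneg h0 h1 y), pow_succ]
    ring
  have e2 : ∀ y : Fin n → Bool, (1/2:ℝ)^(n+1) * f2 ((1-α) * condP n α (lexFun n k) y)
      = ((1-α)/2) * ((1/2)^n * f2 (condP n α (lexFun n k) y))
        + (f2 (1-α)/2) * ((1/2)^n * condP n α (lexFun n k) y) := by
    intro y
    rw [f2_mul h1' (condP_nonneg h0 h1 y), pow_succ]
    ring
  simp only [e1, e2]
  rw [Finset.sum_add_distrib, Finset.sum_add_distrib]
  simp only [← Finset.mul_sum]
  have hS2 : ∑ y : Fin n → Bool, (1/2:ℝ)^n * condP n α (lexFun n k) y = (k:ℝ)/2^n := by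
    have : ∀ y : Fin n → Bool, (1/2:ℝ)^n * condP n α (lexFun n k) y
        = pBY n α (lexFun n k) false y := by
      intro y
      rw [condP]
      have : ((1:ℝ)/2)^n * (2:ℝ)^n = 1 := by
        rw [div_pow, one_pow, div_mul_cancel₀]
        positivity
      calc (1/2:ℝ)^n * ((2:ℝ)^n * pBY n α (lexFun n k) false y)
          = ((1/2:ℝ)^n * (2:ℝ)^n) * pBY n α (lexFun n k) false y := by ring
        _ = pBY n α (lexFun n k) false y := by rw [this, one_mul]
    simp only [this]
    rw [sum_pBY_lex hk, one_div, inv_pow, div_eq_mul_inv]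
  have hS1' : (1/2:ℝ)^n * ∑ y : Fin n → Bool, f2 (condP n α (lexFun n k) y) = Tdy α n k := by
    rw [Finset.mul_sum]; rfl
  have hS2' : (1/2:ℝ)^n * ∑ y : Fin n → Bool, condP n α (lexFun n k) y = (k:ℝ)/2^n := by
    rw [Finset.mul_sum]; exact hS2
  rw [hS1', hS2', binEnt]
  ring

lemma exists_interval (q : ℕ → ℝ) (m : ℕ) (hm : 0 < m)
    (hmono : ∀ j < m, q j < q (j+1)) (p : ℝ) (h1 : q 0 ≤ p) (h2 : p ≤ q m) :
    ∃ j, j < m ∧ q j ≤ p ∧ p ≤ q (j+1) := by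
  induction m with
  | zero => omega
  | succ M ih =>
    rcases Nat.eq_zero_or_pos M with hM | hM
    · subst hM; exact ⟨0, by omega, h1, h2⟩
    · by_cases hple : p ≤ q M
      · obtain ⟨j, hj, h⟩ := ih hM (fun j hj => hmono j (by omega)) hple
        exact ⟨j, by omega, h⟩
      · exact ⟨M, lt_add_one M, (le_of_not_ge hple), h2⟩

lemma q_monotone (q : ℕ → ℝ) (m : ℕ) (hmono : ∀ j < m, q j < q (j+1)) :
    ∀ i j, i ≤ j → j ≤ m → q i ≤ q j := by
  intro i j hij hjm
  induction j with
  | zero => simp_all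
  | succ J ih =>
    rcases Nat.eq_or_lt_of_le hij with h | h
    · rw [h]
    · exact le_trans (ih (by omega) (by omega)) (le_of_lt (hmono J (by omega)))

lemma floor_seq_le (p : ℝ) (hp : 0 ≤ p) (t : ℕ) :
    ((⌊p * 2^t⌋₊ : ℝ)/2^t) ≤ p := by
  rw [div_le_iff₀ (by positivity)]
  exact Nat.floor_le (by positivity)

lemma floor_seq_ge (p : ℝ) (t : ℕ) :
    p - 1/2^t ≤ ((⌊p * 2^t⌋₊ : ℝ)/2^t) := by
  rw [sub_le_iff_le_add, ← add_div, le_div_iff₀ (by positivity)]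
  have := Nat.lt_floor_add_one (p * 2^t)
  linarith

lemma floor_seq_tendsto (p : ℝ) (hp : 0 ≤ p) :
    Filter.Tendsto (fun t : ℕ => ((⌊p * 2^t⌋₊ : ℝ)/2^t)) Filter.atTop (nhds p) := by
  apply tendsto_of_tendsto_of_tendsto_of_le_of_le
    (g := fun t : ℕ => p - 1/2^t) (h := fun _ => p)
  · have h2 : Filter.Tendsto (fun t : ℕ => (1:ℝ)/2^t) Filter.atTop (nhds 0) := by
      simp only [← one_div_pow]
      exact tendsto_pow_atTop_nhds_zero_of_lt_one (by norm_num) (by norm_num)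
    have := Filter.Tendsto.const_sub p h2
    simpa using this
  · exact tendsto_const_nhds
  · exact fun t => floor_seq_ge p t
  · exact fun t => floor_seq_le p hp t

lemma chord_lower_dyadic (α : ℝ) (h0 : 0 ≤ α) (h1 : α ≤ 1) (Tα : ℝ → ℝ)
    (hdy : ∀ n k : ℕ, k ≤ 2^n → Tα ((k:ℝ)/2^n) = Tdy α n k)
    (nj kj : ℕ) (hkj : kj + 1 ≤ 2^nj) (c1 c2 : ℝ)
    (hL0 : c1 + c2 * ((kj:ℝ)/2^nj) ≤ Tα ((kj:ℝ)/2^nj))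
    (hL1 : c1 + c2 * (((kj:ℝ)+1)/2^nj) ≤ Tα (((kj:ℝ)+1)/2^nj)) :
    ∀ t i : ℕ, kj * 2^t ≤ i → i ≤ (kj+1) * 2^t →
      c1 + c2 * ((i:ℝ)/2^(nj+t)) ≤ Tα ((i:ℝ)/2^(nj+t)) := by
  intro t
  induction t with
  | zero =>
    intro i hlo hhi
    simp only [pow_zero, mul_one] at hlo hhi
    have : i = kj ∨ i = kj + 1 := by omega
    rcases this with h | h <;> subst h
    · simpa using hL0
    · have e : ((kj+1 : ℕ) : ℝ) = ((kj:ℝ)+1) := by push_cast; ring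
      rw [Nat.add_zero, e]
      exact hL1
  | succ t ih =>
    intro i hlo hhi
    have hpow : (0:ℝ) < 2^(nj+t) := by positivity
    have hp2 : 2^(t+1) = 2*2^t := by rw [pow_succ]; ring
    have hp3 : 2^(nj+(t+1)) = 2*2^(nj+t) := by rw [← Nat.add_assoc, pow_succ]; ring
    have hlo' : 2*(kj * 2^t) ≤ i := by
      have e : kj * 2^(t+1) = 2*(kj * 2^t) := by rw [pow_succ]; ring
      omega
    have hhi' : i ≤ 2*((kj+1) * 2^t) := by
      have e : (kj+1) * 2^(t+1) = 2*((kj+1) * 2^t) := by rw [pow_succ]; ring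
      omega
    rcases Nat.even_or_odd i with ⟨r, hr⟩ | ⟨r, hr⟩
    · subst hr
      have e : ((r + r : ℕ):ℝ)/2^(nj+(t+1)) = (r:ℝ)/2^(nj+t) := by
        push_cast
        rw [pow_add, pow_add, pow_succ]
        field_simp
        ring
      rw [e]
      exact ih r (by omega) (by omega)
    · subst hr
      have hr1 : r + 1 ≤ (kj+1) * 2^t := by omega
      have hr0 : kj * 2^t ≤ r := by omega
      have hrle : r ≤ 2^(nj+t) := by
        calc r ≤ (kj+1) * 2^t - 1 := by omega
          _ ≤ 2^nj * 2^t - 1 := by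
            have : (kj+1) * 2^t ≤ 2^nj * 2^t := Nat.mul_le_mul_right _ hkj
            omega
          _ ≤ 2^(nj+t) := by rw [pow_add]; omega
      have hrle1 : r + 1 ≤ 2^(nj+t) := by
        have : (kj+1) * 2^t ≤ 2^(nj+t) := by
          rw [pow_add]; exact Nat.mul_le_mul_right _ hkj
        omega
      have hile : 2*r+1 ≤ 2^(nj+(t+1)) := by
        omega
      have key1 : Tα ((2*r+1 : ℕ) / 2^(nj+(t+1)) : ℝ) = Tdy α (nj+t+1) (2*r+1) := by
        have := hdy (nj+t+1) (2*r+1) (by omega)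
        exact this
      have key2 : Tα ((r:ℝ)/2^(nj+t)) = Tdy α (nj+t) r := hdy (nj+t) r hrle
      have key3 : Tα (((r+1:ℕ):ℝ)/2^(nj+t)) = Tdy α (nj+t) (r+1) := hdy (nj+t) (r+1) hrle1
      have hmid := Tdy_midpoint h0 h1 (nj+t) r
      have ih1 := ih r hr0 (by omega)
      have ih2 := ih (r+1) (by omega) hr1
      have emid : ((2*r+1 : ℕ):ℝ)/2^(nj+(t+1))
          = ((r:ℝ)/2^(nj+t) + ((r+1:ℕ):ℝ)/2^(nj+t))/2 := by
        push_cast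
        rw [pow_add, pow_add, pow_succ]
        field_simp
        ring
      calc c1 + c2 * ((2*r+1 : ℕ) / 2^(nj+(t+1)) : ℝ)
          = ((c1 + c2 * ((r:ℝ)/2^(nj+t))) + (c1 + c2 * (((r+1:ℕ):ℝ)/2^(nj+t))))/2 := by
            rw [emid]; push_cast; ring
        _ ≤ (Tα ((r:ℝ)/2^(nj+t)) + Tα (((r+1:ℕ):ℝ)/2^(nj+t)))/2 := by linarith
        _ = (Tdy α (nj+t) r + Tdy α (nj+t) (r+1))/2 := by rw [key2, key3]
        _ ≤ Tdy α (nj+t+1) (2*r+1) := hmid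
        _ = Tα ((2*r+1 : ℕ) / 2^(nj+(t+1)) : ℝ) := key1.symm

/-- Soundness of the chord-based verification: fix `α ∈ (0,1/2)` and let `T_α` be
the continuous extension of the dyadic values. If there is a partition
`1/2 = q₀ < q₁ < ⋯ < q_m = 1` where each `[q_{j}, q_{j+1}] = [k/2ᵐ, (k+1)/2ᵐ]` for
some integers, and each chord joining `(q_j, T_α(q_j))` and `(q_{j+1}, T_α(q_{j+1}))`
dominates `f(x)H(α)` on `[q_j, q_{j+1}]`, then `T_α(p) ≥ f(p)H(α)` on all of
`[0,1]`. -/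
theorem chord_verification_sound (α : ℝ) (hα : α ∈ Set.Ioo (0:ℝ) (1/2))
    (Tα : ℝ → ℝ)
    (hcont : ContinuousOn Tα (Set.Icc 0 1))
    (hdy : ∀ n k : ℕ, k ≤ 2^n → Tα ((k:ℝ)/2^n) = Tdy α n k)
    (m : ℕ) (hm : 0 < m) (q : ℕ → ℝ) (hq0 : q 0 = 1/2) (hqm : q m = 1)
    (hmono : ∀ j < m, q j < q (j+1))
    (hdyadic : ∀ j < m, ∃ kj nj : ℕ,
      q j = (kj:ℝ)/2^nj ∧ q (j+1) = ((kj:ℝ)+1)/2^nj)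
    (hchord : ∀ j < m, ∀ x ∈ Set.Icc (q j) (q (j+1)),
      Tα (q j) + (Tα (q (j+1)) - Tα (q j)) / (q (j+1) - q j) * (x - q j) ≥
        f2 x * binEnt α) :
    ∀ p ∈ Set.Icc (0:ℝ) 1, Tα p ≥ f2 p * binEnt α := by
  have h0 : (0:ℝ) ≤ α := le_of_lt hα.1
  have h1 : α ≤ 1 := by have := hα.2; norm_num at this ⊢; linarith
  have hbE : 0 ≤ binEnt α := by
    have := hα.2
    exact add_nonneg (f2_nonneg h0 h1) (f2_nonneg (by linarith) (by linarith))
  -- Step A : on [1/2, 1]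
  have stepA : ∀ x : ℝ, 1/2 ≤ x → x ≤ 1 → f2 x * binEnt α ≤ Tα x := by
    intro x hx1 hx2
    obtain ⟨j, hjm, hxl, hxr⟩ := exists_interval q m hm hmono x
      (by rw [hq0]; exact hx1) (by rw [hqm]; exact hx2)
    obtain ⟨kj, nj, hqj, hqj1⟩ := hdyadic j hjm
    have hd : q j < q (j+1) := hmono j hjm
    set c2 := (Tα (q (j+1)) - Tα (q j)) / (q (j+1) - q j) with hc2
    set c1 := Tα (q j) - c2 * q j with hc1
    have hLx : ∀ z : ℝ, c1 + c2 * z = Tα (q j) + c2 * (z - q j) := by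
      intro z; rw [hc1]; ring
    have hpnj : (0:ℝ) < 2^nj := by positivity
    have hkj1 : kj + 1 ≤ 2^nj := by
      have hle : q (j+1) ≤ 1 := by
        rw [← hqm]; exact q_monotone q m hmono (j+1) m (by omega) (le_refl m)
      rw [hqj1, div_le_one hpnj] at hle
      have : ((kj + 1 : ℕ) : ℝ) ≤ ((2^nj : ℕ) : ℝ) := by push_cast; linarith
      exact_mod_cast this
    have hend0 : c1 + c2 * ((kj:ℝ)/2^nj) ≤ Tα ((kj:ℝ)/2^nj) := by
      rw [← hqj, hLx]; simp
    have hend1 : c1 + c2 * (((kj:ℝ)+1)/2^nj) ≤ Tα (((kj:ℝ)+1)/2^nj) := by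
      rw [← hqj1, hLx, hc2, div_mul_cancel₀ _ (by linarith : q (j+1) - q j ≠ 0)]
      apply le_of_eq; ring
    have hdyb := chord_lower_dyadic α h0 h1 Tα hdy nj kj hkj1 c1 c2 hend0 hend1
    have hx0 : (0:ℝ) ≤ x := by linarith
    set s : ℕ → ℝ := fun t => ((⌊x * 2^(nj+t)⌋₊ : ℝ))/2^(nj+t) with hs
    have hger : ∀ t : ℕ, c1 + c2 * s t ≤ Tα (s t) := by
      intro t
      have hxl' : (kj:ℝ)/2^nj ≤ x := by rw [← hqj]; exact hxl
      have hxr' : x ≤ ((kj:ℝ)+1)/2^nj := by rw [← hqj1]; exact hxr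
      rw [div_le_iff₀ hpnj] at hxl'
      rw [le_div_iff₀ hpnj] at hxr'
      have hpt : (0:ℝ) < 2^t := by positivity
      have hlo : kj * 2^t ≤ ⌊x * 2^(nj+t)⌋₊ := by
        apply Nat.le_floor
        push_cast
        rw [pow_add]
        calc (kj:ℝ) * 2^t ≤ (x * 2^nj) * 2^t := by nlinarith
          _ = x * (2^nj * 2^t) := by ring
      have hhi : ⌊x * 2^(nj+t)⌋₊ ≤ (kj+1) * 2^t := by
        have hfl : (⌊x * 2^(nj+t)⌋₊:ℝ) ≤ x * 2^(nj+t) := Nat.floor_le (by positivity)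
        have : (⌊x * 2^(nj+t)⌋₊:ℝ) ≤ (((kj+1) * 2^t : ℕ):ℝ) := by
          push_cast
          calc (⌊x * 2^(nj+t)⌋₊:ℝ) ≤ x * 2^(nj+t) := hfl
            _ = (x * 2^nj) * 2^t := by rw [pow_add]; ring
            _ ≤ ((kj:ℝ)+1) * 2^t := by nlinarith
        exact_mod_cast this
      exact hdyb t _ hlo hhi
    have hsle : ∀ t, s t ≤ x := fun t => floor_seq_le x hx0 (nj+t)
    have hsge : ∀ t, x - 1/2^t ≤ s t := by
      intro t
      refine le_trans ?_ (floor_seq_ge x (nj+t))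
      have : (1:ℝ)/2^(nj+t) ≤ 1/2^t := by
        apply div_le_div_of_nonneg_left (by norm_num) (by positivity)
        exact pow_le_pow_right₀ (by norm_num) (by omega)
      linarith
    have htend : Filter.Tendsto s Filter.atTop (nhds x) := by
      apply tendsto_of_tendsto_of_tendsto_of_le_of_le
        (g := fun t : ℕ => x - 1/2^t) (h := fun _ => x)
      · have h2 : Filter.Tendsto (fun t : ℕ => (1:ℝ)/2^t) Filter.atTop (nhds 0) := by
          simp only [← one_div_pow]
          exact tendsto_pow_atTop_nhds_zero_of_lt_one (by norm_num) (by norm_num)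
        have := Filter.Tendsto.const_sub x h2
        simpa using this
      · exact tendsto_const_nhds
      · exact hsge
      · exact hsle
    have hs_mem : ∀ t, s t ∈ Set.Icc (0:ℝ) 1 := by
      intro t
      constructor
      · positivity
      · exact le_trans (hsle t) hx2
    have hT : Filter.Tendsto (fun t => Tα (s t)) Filter.atTop (nhds (Tα x)) := by
      have hcx : ContinuousWithinAt Tα (Set.Icc 0 1) x := hcont x ⟨hx0, hx2⟩
      have hw : Filter.Tendsto s Filter.atTop (nhdsWithin x (Set.Icc 0 1)) :=
        tendsto_nhdsWithin_of_tendsto_nhds_of_eventually_within s htend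
          (Filter.Eventually.of_forall hs_mem)
      exact hcx.tendsto.comp hw
    have hL : Filter.Tendsto (fun t => c1 + c2 * s t) Filter.atTop (nhds (c1 + c2 * x)) :=
      tendsto_const_nhds.add (htend.const_mul c2)
    have hfin : c1 + c2 * x ≤ Tα x :=
      le_of_tendsto_of_tendsto' hL hT hger
    have hch := hchord j hjm x ⟨hxl, hxr⟩
    calc f2 x * binEnt α ≤ Tα (q j) + c2 * (x - q j) := hch
      _ = c1 + c2 * x := (hLx x).symm
      _ ≤ Tα x := hfin
  -- Step B : halving identity on [0, 1/2]
  have stepB : ∀ x : ℝ, 0 ≤ x → x ≤ 1/2 → Tα x = Tα (2*x)/2 + x * binEnt α := by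
    intro x hx0 hx2
    set s : ℕ → ℝ := fun t => ((⌊x * 2^(t+1)⌋₊ : ℝ))/2^(t+1) with hs
    have hkle : ∀ t : ℕ, ⌊x * 2^(t+1)⌋₊ ≤ 2^t := by
      intro t
      have hfl : (⌊x * 2^(t+1)⌋₊:ℝ) ≤ x * 2^(t+1) := Nat.floor_le (by positivity)
      have hp : (2:ℝ)^(t+1) = 2^t * 2 := pow_succ 2 t
      have : (⌊x * 2^(t+1)⌋₊:ℝ) ≤ ((2^t : ℕ):ℝ) := by
        push_cast
        nlinarith [pow_pos (show (0:ℝ) < 2 by norm_num) t]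
      exact_mod_cast this
    have hval : ∀ t : ℕ, Tα (s t) = Tα (2 * s t)/2 + s t * binEnt α := by
      intro t
      set k := ⌊x * 2^(t+1)⌋₊ with hk
      have h2s : 2 * s t = (k:ℝ)/2^t := by
        have hst : s t = (k:ℝ)/2^(t+1) := by simp only [hs, hk]
        rw [hst, pow_succ]
        ring
      have e1 : Tα (s t) = Tdy α (t+1) k := by
        have h2 : (2:ℕ)^t ≤ 2^(t+1) := Nat.pow_le_pow_right (by norm_num) (Nat.le_succ t)
        have := hdy (t+1) k (le_trans (hkle t) h2)
        have hst : s t = ((k:ℕ):ℝ)/2^(t+1) := by simp only [hs, hk]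
        rw [hst]
        exact this
      have e2 : Tα (2 * s t) = Tdy α t k := by rw [h2s]; exact hdy t k (hkle t)
      rw [e1, e2, Tdy_half h0 h1 (hkle t)]
      have : (k:ℝ)/2^t = 2 * s t := h2s.symm
      rw [this]
      ring
    have hsle : ∀ t, s t ≤ x := fun t => floor_seq_le x hx0 (t+1)
    have hsge : ∀ t, x - 1/2^t ≤ s t := by
      intro t
      refine le_trans ?_ (floor_seq_ge x (t+1))
      have : (1:ℝ)/2^(t+1) ≤ 1/2^t := by
        apply div_le_div_of_nonneg_left (by norm_num) (by positivity)
        exact pow_le_pow_right₀ (by norm_num) (by omega)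
      linarith
    have htend : Filter.Tendsto s Filter.atTop (nhds x) := by
      apply tendsto_of_tendsto_of_tendsto_of_le_of_le
        (g := fun t : ℕ => x - 1/2^t) (h := fun _ => x)
      · have h2 : Filter.Tendsto (fun t : ℕ => (1:ℝ)/2^t) Filter.atTop (nhds 0) := by
          simp only [← one_div_pow]
          exact tendsto_pow_atTop_nhds_zero_of_lt_one (by norm_num) (by norm_num)
        have := Filter.Tendsto.const_sub x h2
        simpa using this
      · exact tendsto_const_nhds
      · exact hsge
      · exact hsle
    have hs_mem : ∀ t, s t ∈ Set.Icc (0:ℝ) 1 := by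
      intro t
      exact ⟨by positivity, le_trans (hsle t) (by linarith)⟩
    have hs2_mem : ∀ t, 2 * s t ∈ Set.Icc (0:ℝ) 1 := by
      intro t
      exact ⟨by positivity, by have := hsle t; linarith⟩
    have hT1 : Filter.Tendsto (fun t => Tα (s t)) Filter.atTop (nhds (Tα x)) := by
      have hcx : ContinuousWithinAt Tα (Set.Icc 0 1) x := hcont x ⟨hx0, by linarith⟩
      exact hcx.tendsto.comp (tendsto_nhdsWithin_of_tendsto_nhds_of_eventually_within s htend
        (Filter.Eventually.of_forall hs_mem))
    have hT2 : Filter.Tendsto (fun t => Tα (2 * s t)/2 + s t * binEnt α) Filter.atTop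
        (nhds (Tα (2*x)/2 + x * binEnt α)) := by
      have hcx : ContinuousWithinAt Tα (Set.Icc 0 1) (2*x) := hcont (2*x) ⟨by linarith, by linarith⟩
      have h2t : Filter.Tendsto (fun t => 2 * s t) Filter.atTop (nhds (2*x)) := htend.const_mul 2
      have hTα2 : Filter.Tendsto (fun t => Tα (2 * s t)) Filter.atTop (nhds (Tα (2*x))) :=
        hcx.tendsto.comp (tendsto_nhdsWithin_of_tendsto_nhds_of_eventually_within _ h2t
          (Filter.Eventually.of_forall hs2_mem))
      exact (hTα2.div_const 2).add (htend.mul_const (binEnt α))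
    have heq : (fun t => Tα (s t)) = fun t => Tα (2 * s t)/2 + s t * binEnt α := funext hval
    exact tendsto_nhds_unique hT1 (heq ▸ hT2)
  -- main induction
  have main : ∀ r : ℕ, ∀ x : ℝ, 0 ≤ x → x ≤ 1 → 1/2 ≤ 2^r * x → f2 x * binEnt α ≤ Tα x := by
    intro r
    induction r with
    | zero =>
      intro x hx0 hx1 hhalf
      rw [pow_zero, one_mul] at hhalf
      exact stepA x hhalf hx1
    | succ r ih =>
      intro x hx0 hx1 hhalf
      by_cases hc : 1/2 ≤ x
      · exact stepA x hc hx1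
      · push_neg at hc
        have h2x : f2 (2*x) * binEnt α ≤ Tα (2*x) := by
          apply ih (2*x) (by linarith) (by linarith)
          have : (2:ℝ)^(r+1) * x = 2^r * (2*x) := by rw [pow_succ]; ring
          linarith
        have hid := stepB x hx0 (le_of_lt hc)
        have hf2 := f2_two_mul x hx0
        have e : f2 x * binEnt α = (f2 (2*x) * binEnt α)/2 + x * binEnt α := by
          rw [hf2]; ring
        rw [hid, e]
        linarith
  intro p hp
  rcases eq_or_lt_of_le hp.1 with h | h
  · -- p = 0
    have hB := stepB 0 le_rfl (by norm_num)
    rw [mul_zero, zero_mul, add_zero] at hB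
    have hT0 : Tα 0 = 0 := by linarith
    rw [← h, hT0]
    have : f2 0 = 0 := by simp [f2]
    rw [this, zero_mul]
  · obtain ⟨r, hr⟩ := pow_unbounded_of_one_lt ((1/2)/p) (one_lt_two)
    apply main r p hp.1 hp.2
    rw [div_lt_iff₀ h] at hr
    nlinarith [hr]
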